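/- For rates R with max{H(X|Y), H(Y|X)} ≤ R, the random-coding exponents satisfy e_r¹(R, P_{XY}) > 0 and e_r²(R, P_{XY}) > 0 whenever R > max{H(X|Y), H(Y|X)}, where e_r¹(R, P) = min_{Q} {D(Q ‖ P) + |R − H_Q(X̃|Ỹ)|⁺} over joint distributions Q on X × Y (and e_r² symmetrically). Consequently the error probability of the linear-code-based complementary delivery scheme vanishes exponentially for all rates above max{H(X|Y), H(Y|X)}. -/

import Mathlib

open Filter

/-- Kullback-Leibler divergence (base 2) between distributions on a finite set. -/
noncomputable def klDiv2 {A : Type*} [Fintype A] (Q P : A → ℝ) : ℝ :=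
  ∑ a, Q a * Real.logb 2 (Q a / P a)

/-- Conditional entropy (base 2) of the first coordinate given the second. -/
noncomputable def condEnt1 {A B : Type*} [Fintype A] [Fintype B] (Q : A × B → ℝ) : ℝ :=
  -∑ z : A × B, Q z * Real.logb 2 (Q z / (∑ a, Q (a, z.2)))

/-- The random-coding error exponent
`e_r(R, P) = min_Q {D(Q‖P) + |R − H_Q(X̃|Ỹ)|⁺}`. -/
noncomputable def erExp {A B : Type*} [Fintype A] [Fintype B]
    (R : ℝ) (P : A × B → ℝ) : ℝ :=
  sInf { e | ∃ Q : A × B → ℝ, (∀ z, 0 ≤ Q z) ∧ (∑ z : A × B, Q z = 1) ∧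
    e = klDiv2 Q P + max (R - condEnt1 Q) 0 }

/-- For `R > max{H(X|Y), H(Y|X)}`, both random-coding exponents are
positive, and consequently the exponential error bounds
`2^{−n(e_r − ε_n)}` of the linear-code-based complementary delivery scheme vanish
as `n → ∞`. -/
lemma klDiv2_eq {A : Type*} [Fintype A] (Q P : A → ℝ) (hP : ∀ a, P a ≠ 0) :
    klDiv2 Q P = (∑ a, Q a * Real.log (Q a)) / Real.log 2 - ∑ a, Q a * Real.logb 2 (P a) := by
  rw [klDiv2, Finset.sum_div, ← Finset.sum_sub_distrib]
  refine Finset.sum_congr rfl fun a _ => ?_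
  rcases eq_or_ne (Q a) 0 with h | h
  · simp [h]
  · rw [Real.logb_div h (hP a), Real.logb]
    ring

lemma condEnt1_eq {A B : Type*} [Fintype A] [Fintype B] (Q : A × B → ℝ)
    (hQ : ∀ z, 0 ≤ Q z) :
    condEnt1 Q = -(((∑ z : A × B, Q z * Real.log (Q z)) -
      ∑ b : B, (∑ a, Q (a, b)) * Real.log (∑ a, Q (a, b))) / Real.log 2) := by
  have key : ∀ z : A × B, Q z * Real.logb 2 (Q z / (∑ a, Q (a, z.2))) =
      Q z * Real.log (Q z) / Real.log 2 - Q z * Real.log (∑ a, Q (a, z.2)) / Real.log 2 := by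
    intro z
    rcases eq_or_ne (Q z) 0 with h | h
    · simp [h]
    · have hm : 0 < ∑ a, Q (a, z.2) := by
        have h1 : Q (z.1, z.2) ≤ ∑ a, Q (a, z.2) :=
          Finset.single_le_sum (fun a _ => hQ (a, z.2)) (Finset.mem_univ z.1)
        have : 0 < Q z := lt_of_le_of_ne (hQ z) (Ne.symm h)
        calc (0:ℝ) < Q z := this
          _ = Q (z.1, z.2) := rfl
          _ ≤ _ := h1
      rw [Real.logb_div h hm.ne']
      simp only [Real.logb]
      ring
  rw [condEnt1]
  simp only [key]
  rw [Finset.sum_sub_distrib, ← Finset.sum_div, ← Finset.sum_div]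
  have : ∑ z : A × B, Q z * Real.log (∑ a, Q (a, z.2)) =
      ∑ b : B, (∑ a, Q (a, b)) * Real.log (∑ a, Q (a, b)) := by
    rw [Fintype.sum_prod_type_right]
    refine Finset.sum_congr rfl fun b _ => ?_
    simp only []
    rw [← Finset.sum_mul]
  rw [this]
  ring

lemma klDiv2_pos {A : Type*} [Fintype A] (Q P : A → ℝ) (hQ0 : ∀ a, 0 ≤ Q a)
    (hQ1 : ∑ a, Q a = 1) (hP0 : ∀ a, 0 < P a) (hP1 : ∑ a, P a = 1) (hne : Q ≠ P) :
    0 < klDiv2 Q P := by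
  have key : ∀ a, Q a - P a ≤ Q a * Real.log (Q a / P a) := by
    intro a
    rcases eq_or_ne (Q a) 0 with h | h
    · simp only [h, zero_mul, zero_sub]
      linarith [(hP0 a).le]
    · have hq : 0 < Q a := lt_of_le_of_ne (hQ0 a) (Ne.symm h)
      have h1 : Real.log (P a / Q a) ≤ P a / Q a - 1 :=
        Real.log_le_sub_one_of_pos (div_pos (hP0 a) hq)
      have h2 : Real.log (Q a / P a) = -Real.log (P a / Q a) := by
        rw [Real.log_div hq.ne' (hP0 a).ne', Real.log_div (hP0 a).ne' hq.ne']; ring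
      rw [h2]
      have h3 : 1 - P a / Q a ≤ Real.log (Q a / P a) := by rw [h2]; linarith
      calc Q a - P a = Q a * (1 - P a / Q a) := by field_simp
        _ ≤ Q a * -Real.log (P a / Q a) := by
            rw [← h2]; exact mul_le_mul_of_nonneg_left h3 hq.le
  have keys : ∀ a, Q a ≠ P a → Q a - P a < Q a * Real.log (Q a / P a) := by
    intro a hne'
    rcases eq_or_ne (Q a) 0 with h | h
    · simp only [h, zero_mul, zero_sub]
      linarith [hP0 a]
    · have hq : 0 < Q a := lt_of_le_of_ne (hQ0 a) (Ne.symm h)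
      have hx : P a / Q a ≠ 1 := by
        intro hc
        exact hne' (by field_simp at hc; linarith)
      have h1 : Real.log (P a / Q a) < P a / Q a - 1 :=
        Real.log_lt_sub_one_of_pos (div_pos (hP0 a) hq) hx
      have h2 : Real.log (Q a / P a) = -Real.log (P a / Q a) := by
        rw [Real.log_div hq.ne' (hP0 a).ne', Real.log_div (hP0 a).ne' hq.ne']; ring
      have h3 : 1 - P a / Q a < Real.log (Q a / P a) := by rw [h2]; linarith
      calc Q a - P a = Q a * (1 - P a / Q a) := by field_simp
        _ < Q a * Real.log (Q a / P a) := by exact mul_lt_mul_of_pos_left h3 hq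
  obtain ⟨a₀, ha₀⟩ := Function.ne_iff.mp hne
  have hsum : 0 < ∑ a, Q a * Real.log (Q a / P a) := by
    have : ∑ a, (Q a - P a) < ∑ a, Q a * Real.log (Q a / P a) :=
      Finset.sum_lt_sum (fun a _ => key a) ⟨a₀, Finset.mem_univ a₀, keys a₀ ha₀⟩
    rwa [Finset.sum_sub_distrib, hQ1, hP1, sub_self] at this
  have heq : klDiv2 Q P = (∑ a, Q a * Real.log (Q a / P a)) / Real.log 2 := by
    rw [klDiv2, Finset.sum_div]
    refine Finset.sum_congr rfl fun a _ => ?_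
    rw [Real.logb]; ring
  rw [heq]
  exact div_pos hsum (Real.log_pos one_lt_two)

lemma erExp_pos {A B : Type*} [Fintype A] [Fintype B] (P : A × B → ℝ)
    (hP0 : ∀ z, 0 < P z) (hP1 : ∑ z : A × B, P z = 1) (R : ℝ)
    (hR : condEnt1 P < R) : 0 < erExp R P := by
  set S : Set (A × B → ℝ) := {Q | (∀ z, 0 ≤ Q z) ∧ ∑ z : A × B, Q z = 1} with hS
  set F : (A × B → ℝ) → ℝ := fun Q =>
    ((∑ z : A × B, Q z * Real.log (Q z)) / Real.log 2 - ∑ z : A × B, Q z * Real.logb 2 (P z)) +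
      max (R + ((∑ z : A × B, Q z * Real.log (Q z)) -
        ∑ b : B, (∑ a, Q (a, b)) * Real.log (∑ a, Q (a, b))) / Real.log 2) 0 with hF
  have hFeq : ∀ Q ∈ S, klDiv2 Q P + max (R - condEnt1 Q) 0 = F Q := by
    rintro Q ⟨hQ0, hQ1⟩
    rw [hF, klDiv2_eq Q P (fun z => (hP0 z).ne'), condEnt1_eq Q hQ0, sub_neg_eq_add]
  have hFpos : ∀ Q ∈ S, 0 < F Q := by
    rintro Q hQS
    rw [← hFeq Q hQS]
    obtain ⟨hQ0, hQ1⟩ := hQS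
    rcases eq_or_ne Q P with rfl | hne
    · have h0 : klDiv2 Q Q = 0 := by
        rw [klDiv2]
        refine Finset.sum_eq_zero fun a _ => ?_
        rcases eq_or_ne (Q a) 0 with h | h
        · simp [h]
        · rw [div_self h, Real.logb_one, mul_zero]
      rw [h0, zero_add]
      exact lt_of_lt_of_le (sub_pos.2 hR) (le_max_left _ _)
    · exact add_pos_of_pos_of_nonneg (klDiv2_pos Q P hQ0 hQ1 hP0 hP1 hne)
        (le_max_right _ _)
  -- compactness of the simplex
  have hsub : S ⊆ Set.pi Set.univ (fun _ : A × B => Set.Icc (0:ℝ) 1) := by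
    rintro Q ⟨hQ0, hQ1⟩ z _
    refine ⟨hQ0 z, ?_⟩
    calc Q z ≤ ∑ w : A × B, Q w :=
          Finset.single_le_sum (fun w _ => hQ0 w) (Finset.mem_univ z)
      _ = 1 := hQ1
  have hclosed : IsClosed S := by
    have h1 : IsClosed {Q : A × B → ℝ | ∀ z, 0 ≤ Q z} := by
      have : {Q : A × B → ℝ | ∀ z, 0 ≤ Q z} = ⋂ z, {Q : A × B → ℝ | 0 ≤ Q z} := by
        ext Q; simp [Set.mem_iInter]
      rw [this]
      exact isClosed_iInter fun z => isClosed_le continuous_const (continuous_apply z)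
    have h2 : IsClosed {Q : A × B → ℝ | ∑ z : A × B, Q z = 1} :=
      isClosed_eq (continuous_finset_sum _ fun z _ => continuous_apply z) continuous_const
    exact h1.inter h2
  have hScpt : IsCompact S :=
    (isCompact_univ_pi fun _ => isCompact_Icc).of_isClosed_subset hclosed hsub
  have hPS : P ∈ S := ⟨fun z => (hP0 z).le, hP1⟩
  have hFc : Continuous F := by
    have c1 : Continuous fun Q : A × B → ℝ => ∑ z : A × B, Q z * Real.log (Q z) :=
      continuous_finset_sum _ fun z _ => Real.continuous_mul_log.comp (continuous_apply z)
    have c2 : Continuous fun Q : A × B → ℝ => ∑ z : A × B, Q z * Real.logb 2 (P z) :=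
      continuous_finset_sum _ fun z _ => (continuous_apply z).mul continuous_const
    have c3 : Continuous fun Q : A × B → ℝ =>
        ∑ b : B, (∑ a, Q (a, b)) * Real.log (∑ a, Q (a, b)) :=
      continuous_finset_sum _ fun b _ =>
        Real.continuous_mul_log.comp (continuous_finset_sum _ fun a _ => continuous_apply (a, b))
    exact ((c1.div_const _).sub c2).add
      (((continuous_const.add ((c1.sub c3).div_const _))).max continuous_const)
  obtain ⟨Q₀, hQ₀S, hmin⟩ := hScpt.exists_isMinOn ⟨P, hPS⟩ hFc.continuousOn
  have hδ : 0 < F Q₀ := hFpos Q₀ hQ₀S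
  refine lt_of_lt_of_le hδ (le_csInf ⟨klDiv2 P P + max (R - condEnt1 P) 0, P, hPS.1, hPS.2, rfl⟩ ?_)
  rintro e ⟨Q, hQ0, hQ1, rfl⟩
  rw [hFeq Q ⟨hQ0, hQ1⟩]
  exact hmin ⟨hQ0, hQ1⟩

lemma tendsto_aux (e K : ℝ) (he : 0 < e) (hK : 0 ≤ K) :
    Tendsto (fun n : ℕ => (2 : ℝ) ^ (-(n : ℝ) *
      (e - 2 * Real.logb 2 (n + 1) / n * K))) atTop (nhds 0) := by
  have hlog2 : 0 < Real.log 2 := Real.log_pos one_lt_two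
  set δ : ℝ := e * Real.log 2 / (8 * (K + 1)) with hδ
  have hδpos : 0 < δ := by positivity
  have hδdef : δ * (8 * (K + 1)) = e * Real.log 2 := by
    rw [hδ, div_mul_cancel₀ _ (by positivity : (8:ℝ) * (K + 1) ≠ 0)]
  have hlittle : (fun n : ℕ => Real.log ((n : ℝ) + 1)) =o[atTop]
      fun n : ℕ => (n : ℝ) + 1 :=
    Real.isLittleO_log_id_atTop.comp_tendsto
      (tendsto_atTop_add_const_right atTop 1 tendsto_natCast_atTop_atTop)
  have hev := hlittle.def hδpos
  have hev2 : ∀ᶠ n : ℕ in atTop, 2 * Real.logb 2 ((n : ℝ) + 1) / n * K ≤ e / 2 := by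
    filter_upwards [hev, eventually_ge_atTop 1] with n hb hn1
    have hn : (1 : ℝ) ≤ n := by exact_mod_cast hn1
    have hL0 : 0 ≤ Real.log ((n : ℝ) + 1) := Real.log_nonneg (by linarith)
    rw [Real.norm_eq_abs, Real.norm_eq_abs, abs_of_nonneg hL0,
      abs_of_nonneg (by linarith : (0:ℝ) ≤ (n : ℝ) + 1)] at hb
    rw [Real.logb]
    have h1 : 2 * (Real.log ((n : ℝ) + 1) / Real.log 2) / n * K
        = 2 * Real.log ((n : ℝ) + 1) * K / (Real.log 2 * n) := by
      field_simp
    rw [h1, div_le_iff₀ (by positivity)]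
    have h2 : Real.log ((n : ℝ) + 1) * K ≤ δ * ((n : ℝ) + 1) * K :=
      mul_le_mul_of_nonneg_right hb hK
    nlinarith [mul_le_mul_of_nonneg_right hδpos.le hK, hδpos.le, hn, he.le,
      mul_le_mul_of_nonneg_right (mul_le_mul_of_nonneg_left hn hδpos.le) hK]
  have hexp : Tendsto (fun n : ℕ => -(n : ℝ) *
      (e - 2 * Real.logb 2 ((n : ℝ) + 1) / n * K)) atTop atBot := by
    refine tendsto_atBot_mono' atTop (f₁ := fun n : ℕ => -(e / 2) * (n : ℝ)) ?_ ?_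
    · filter_upwards [hev2, eventually_ge_atTop 1] with n hd hn1
      have hn : (1 : ℝ) ≤ n := by exact_mod_cast hn1
      show -(n : ℝ) * (e - 2 * Real.logb 2 ((n : ℝ) + 1) / n * K) ≤ -(e / 2) * n
      nlinarith [mul_le_mul_of_nonneg_left hd (by linarith : (0:ℝ) ≤ (n:ℝ))]
    · exact (tendsto_const_mul_atBot_of_neg (by linarith : -(e/2) < 0)).2
        tendsto_natCast_atTop_atTop
  have hrw : ∀ x : ℝ, (2 : ℝ) ^ x = Real.exp (Real.log 2 * x) := fun x =>
    Real.rpow_def_of_pos two_pos x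
  simp only [hrw]
  exact Real.tendsto_exp_atBot.comp
    ((tendsto_const_mul_atBot_of_pos hlog2).2 hexp)

theorem stmt16 (X Y : Type) [Fintype X] [Fintype Y] [Nonempty X] [Nonempty Y]
    (P : X × Y → ℝ) (hP0 : ∀ z, 0 < P z) (hP1 : ∑ z : X × Y, P z = 1)
    (R : ℝ)
    (hR : max (condEnt1 P) (condEnt1 (fun z : Y × X => P (z.2, z.1))) < R) :
    0 < erExp R P ∧
    0 < erExp R (fun z : Y × X => P (z.2, z.1)) ∧
    Tendsto (fun n : ℕ => (2 : ℝ) ^ (-(n : ℝ) * (erExp R P -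
        2 * Real.logb 2 (n + 1) / n *
          ((Fintype.card X : ℝ) ^ 2 * (Fintype.card Y : ℝ) ^ 2))))
      atTop (nhds 0) ∧
    Tendsto (fun n : ℕ => (2 : ℝ) ^ (-(n : ℝ) *
        (erExp R (fun z : Y × X => P (z.2, z.1)) -
          2 * Real.logb 2 (n + 1) / n *
            ((Fintype.card X : ℝ) ^ 2 * (Fintype.card Y : ℝ) ^ 2))))
      atTop (nhds 0) := by
  have hP1' : ∑ z : Y × X, P (z.2, z.1) = 1 := by
    rw [← hP1]
    exact Fintype.sum_equiv (Equiv.prodComm Y X) _ _ (fun z => rfl)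
  have h1 : 0 < erExp R P :=
    erExp_pos P hP0 hP1 R (lt_of_le_of_lt (le_max_left _ _) hR)
  have h2 : 0 < erExp R (fun z : Y × X => P (z.2, z.1)) :=
    erExp_pos _ (fun z => hP0 _) hP1' R (lt_of_le_of_lt (le_max_right _ _) hR)
  have hK : (0:ℝ) ≤ (Fintype.card X : ℝ) ^ 2 * (Fintype.card Y : ℝ) ^ 2 := by positivity
  exact ⟨h1, h2, tendsto_aux _ _ h1 hK, tendsto_aux _ _ h2 hK⟩
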